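/- Partial inverse-probability-weighting representation of the iterated g-formula functional: fix an integer k ≥ 1, adopt the core setup, and let Y_j be integrable. Then for every m ∈ {1,…,k+1}, φ_{j,k} = E_P[ 1_{B_{m−1}} g_{m−1}^{−1} Q^{j,k,m} ]. In particular, taking m = k+1 gives the sequential inverse-probability-weighted identity φ_{j,k} = E_P[ 1_{B_k} g_k^{−1} Y_j ]. The conclusion holds for any choice of versions in the conditional-expectation recursion. -/

import Mathlib

open MeasureTheory ProbabilityTheory

private lemma pullout_integral {Ω : Type*} {m : MeasurableSpace Ω} [mΩ : MeasurableSpace Ω] (hm : m ≤ mΩ)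
    {μ : Measure Ω} [IsFiniteMeasure μ] {f g : Ω → ℝ}
    (hf : StronglyMeasurable[m] f) (hfg : Integrable (fun ω => f ω * g ω) μ)
    (hg : Integrable g μ) :
    ∫ ω, f ω * g ω ∂μ = ∫ ω, f ω * (μ[g|m]) ω ∂μ := by
  have hfg' : Integrable (f * g) μ := hfg
  have h1 := condExp_mul_of_stronglyMeasurable_left hf hfg' hg
  have h2 : ∫ ω, (μ[f * g|m]) ω ∂μ = ∫ ω, (f * g) ω ∂μ := integral_condExp hm
  calc ∫ ω, f ω * g ω ∂μ = ∫ ω, (μ[f * g|m]) ω ∂μ := h2.symm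
    _ = ∫ ω, f ω * (μ[g|m]) ω ∂μ := integral_congr_ae h1

private lemma setIntegral_eq_cond {Ω : Type*} [mΩ : MeasurableSpace Ω] (P : Measure Ω)
    {C : Set Ω} (hC0 : P C ≠ 0) (hCtop : P C ≠ ⊤) (f : Ω → ℝ) :
    ∫ ω in C, f ω ∂P = (P C).toReal * ∫ ω, f ω ∂P[|C] := by
  rw [show P[|C] = (P C)⁻¹ • P.restrict C from rfl, integral_smul_measure,
    ENNReal.toReal_inv, smul_eq_mul, ← mul_assoc,
    mul_inv_cancel₀ (ENNReal.toReal_ne_zero.mpr ⟨hC0, hCtop⟩), one_mul]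

private lemma integrable_cond_iff {Ω : Type*} [mΩ : MeasurableSpace Ω] {P : Measure Ω}
    {C : Set Ω} (hC0 : P C ≠ 0) (hCtop : P C ≠ ⊤) (f : Ω → ℝ) :
    Integrable f P[|C] ↔ IntegrableOn f C P := by
  rw [show P[|C] = (P C)⁻¹ • P.restrict C from rfl,
    integrable_smul_measure (by simp [ENNReal.inv_eq_zero, hCtop]) (by simp [hC0])]
  exact Iff.rfl

private lemma integrable_mul_indicator_cond {Ω : Type*} [mΩ : MeasurableSpace Ω]
    {P : Measure Ω} {B C : Set Ω} (hC : MeasurableSet C) (hCB : C ⊆ B)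
    (hB0 : P B ≠ 0) (hBtop : P B ≠ ⊤) (hC0 : P C ≠ 0) (hCtop : P C ≠ ⊤) (f : Ω → ℝ) :
    Integrable (fun ω => f ω * C.indicator (fun _ => (1:ℝ)) ω) P[|B] ↔
      Integrable f P[|C] := by
  have hfi : (fun ω => f ω * C.indicator (fun _ => (1:ℝ)) ω) = C.indicator f := by
    funext ω; by_cases h : ω ∈ C <;> simp [h]
  rw [hfi, show P[|B] = (P B)⁻¹ • P.restrict B from rfl,
    integrable_smul_measure (by simp [ENNReal.inv_eq_zero, hBtop]) (by simp [hB0]),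
    integrable_indicator_iff hC, IntegrableOn, Measure.restrict_restrict_of_subset hCB,
    integrable_cond_iff hC0 hCtop]
  exact Iff.rfl

private lemma integrable_transfer {Ω : Type*} {𝒲 : MeasurableSpace Ω} [mΩ : MeasurableSpace Ω] (hm : 𝒲 ≤ mΩ)
    {ν : Measure Ω} [IsFiniteMeasure ν] {C : Set Ω} (hC : MeasurableSet C)
    {p f : Ω → ℝ} (hf : StronglyMeasurable[𝒲] f)
    (hpver : p =ᵐ[ν] ν[C.indicator (fun _ => (1:ℝ)) | 𝒲])
    {ε : ℝ} (hε : 0 < ε) (hppos : ∀ᵐ ω ∂ν, ε ≤ p ω)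
    (hint : Integrable (fun ω => f ω * C.indicator (fun _ => (1:ℝ)) ω) ν) :
    Integrable f ν := by
  have hind : Integrable (C.indicator fun _ => (1:ℝ)) ν := (integrable_const 1).indicator hC
  have hint' : Integrable (f * C.indicator (fun _ => (1:ℝ))) ν := hint
  have hpull := condExp_mul_of_stronglyMeasurable_left hf hint' hind
  have h1 : Integrable (f * ν[C.indicator (fun _ => (1:ℝ))|𝒲]) ν :=
    integrable_condExp.congr hpull
  have h2 : Integrable (fun ω => f ω * p ω) ν := by
    refine h1.congr ?_
    filter_upwards [hpver] with ω h
    simp only [Pi.mul_apply]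
    rw [h]
  have hfae : AEStronglyMeasurable f ν := (hf.mono hm).aestronglyMeasurable
  refine ((h2.norm.const_mul ε⁻¹)).mono' hfae ?_
  filter_upwards [hppos] with ω hω
  have hp0 : 0 ≤ p ω := le_trans hε.le hω
  rw [Real.norm_eq_abs]
  calc |f ω| = ε⁻¹ * (ε * |f ω|) := by field_simp
    _ ≤ ε⁻¹ * (|f ω| * p ω) := by
        have h1' : ε * |f ω| ≤ |f ω| * p ω := by nlinarith [abs_nonneg (f ω)]
        have h2' : (0:ℝ) ≤ ε⁻¹ := inv_nonneg.mpr hε.le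
        nlinarith
    _ = ε⁻¹ * ‖f ω * p ω‖ := by rw [Real.norm_eq_abs, abs_mul, abs_of_nonneg hp0]

set_option maxHeartbeats 2000000 in
/-- Partial inverse-probability-weighting representation of the iterated
g-formula functional: under the core setup, for integrable `Y = Y_j` and any choice of
versions `Q m` in the conditional-expectation recursion, for every `1 ≤ m ≤ k + 1`,
`φ_{j,k} = E_P[Q 1] = E_P[1_{B (m-1)} (g (m-1))⁻¹ Q m]`; in particular (taking
`m = k + 1`) the sequential IPW identity `φ_{j,k} = E_P[1_{B k} (g k)⁻¹ Y]` holds. -/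
theorem partial_ipw_representation
    {Ω : Type*} [inst : MeasurableSpace Ω] (P : Measure Ω) [IsProbabilityMeasure P]
    (k : ℕ) (hk : 1 ≤ k)
    (B : ℕ → Set Ω)
    (hBmeas : ∀ m, m ≤ k → MeasurableSet (B m))
    (hBmono : ∀ m, m < k → B (m + 1) ⊆ B m)
    (hB0 : P (B 0) = 1)
    (hBk : 0 < P (B k))
    (𝒲 : ℕ → MeasurableSpace Ω)
    (h𝒲le : ∀ m, 1 ≤ m → m ≤ k → 𝒲 m ≤ inst)
    (h𝒲mono : ∀ m, 1 ≤ m → m < k → 𝒲 m ≤ 𝒲 (m + 1))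
    (ε : ℝ) (hε : 0 < ε)
    (p : ℕ → Ω → ℝ)
    (hpmeas : ∀ m, 1 ≤ m → m ≤ k → Measurable[𝒲 m] (p m))
    (hpver : ∀ m, 1 ≤ m → m ≤ k →
      p m =ᵐ[P[|B (m - 1)]] (P[|B (m - 1)])[(B m).indicator (fun _ => (1 : ℝ))|𝒲 m])
    (hppos : ∀ m, 1 ≤ m → m ≤ k → ∀ᵐ ω ∂P, ε ≤ p m ω)
    (g : ℕ → Ω → ℝ)
    (hg : ∀ m ω, g m ω = ∏ s ∈ Finset.Icc 1 m, p s ω)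
    (Y : Ω → ℝ) (hYint : Integrable Y P)
    (Q : ℕ → Ω → ℝ)
    (hQtop : Q (k + 1) = Y)
    (hQmeas : ∀ m, 1 ≤ m → m ≤ k → Measurable[𝒲 m] (Q m))
    (hQver : ∀ m, 1 ≤ m → m ≤ k → Q m =ᵐ[P[|B m]] (P[|B m])[Q (m + 1)|𝒲 m])
    :
    (∀ m, 1 ≤ m → m ≤ k + 1 →
      ∫ ω, Q 1 ω ∂P = ∫ ω in B (m - 1), (g (m - 1) ω)⁻¹ * Q m ω ∂P)
    ∧ ∫ ω, Q 1 ω ∂P = ∫ ω in B k, (g k ω)⁻¹ * Y ω ∂P := by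
  -- monotonicity of the filtration
  have h𝒲mono' : ∀ b, b ≤ k → ∀ a, 1 ≤ a → a ≤ b → 𝒲 a ≤ 𝒲 b := by
    intro b
    induction b with
    | zero => intro _ a h1 h2; omega
    | succ n ih =>
      intro hbk a h1 h2
      rcases eq_or_lt_of_le h2 with h | h
      · exact le_of_eq (by rw [h])
      · exact le_trans (ih (by omega) a h1 (by omega)) (h𝒲mono n (by omega) (by omega))
  -- monotonicity of the events
  have hBsub : ∀ b, b ≤ k → ∀ a, a ≤ b → B b ⊆ B a := by
    intro b
    induction b with
    | zero => intro _ a ha; rw [Nat.le_zero.mp ha]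
    | succ n ih =>
      intro hbk a ha
      rcases eq_or_lt_of_le ha with h | h
      · subst h; exact subset_rfl
      · exact (hBmono n (by omega)).trans (ih (by omega) a (by omega))
  have hBpos : ∀ m, m ≤ k → 0 < P (B m) :=
    fun m hm => lt_of_lt_of_le hBk (measure_mono (hBsub k le_rfl m hm))
  -- a.e. lower bound for all p's simultaneously
  have hpp : ∀ᵐ ω ∂P, ∀ s, 1 ≤ s → s ≤ k → ε ≤ p s ω := by
    rw [MeasureTheory.ae_all_iff]
    intro s
    by_cases h1 : 1 ≤ s
    · by_cases h2 : s ≤ k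
      · filter_upwards [hppos s h1 h2] with ω h _ _; exact h
      · filter_upwards with ω h1' h2'; exact absurd h2' h2
    · filter_upwards with ω h1'; exact absurd h1' h1
  have haeg : ∀ j, j ≤ k → ∀ᵐ ω ∂P, ε ^ j ≤ g j ω := by
    intro j hj
    filter_upwards [hpp] with ω hω
    rw [hg]
    calc ε ^ j = ∏ _s ∈ Finset.Icc 1 j, ε := by
          rw [Finset.prod_const, Nat.card_Icc, Nat.add_sub_cancel]
      _ ≤ ∏ s ∈ Finset.Icc 1 j, p s ω := by
          refine Finset.prod_le_prod (fun s _ => hε.le) (fun s hs => ?_)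
          simp only [Finset.mem_Icc] at hs
          exact hω s hs.1 (hs.2.trans hj)
  -- measurability of g
  have hgmeas : ∀ a b, a ≤ b → 1 ≤ b → b ≤ k → Measurable[𝒲 b] (g a) := by
    intro a b hab h1b hbk
    have hge : g a = fun ω => ∏ s ∈ Finset.Icc 1 a, p s ω := funext fun ω => hg a ω
    rw [hge]
    refine Finset.measurable_prod _ fun s hs => ?_
    simp only [Finset.mem_Icc] at hs
    exact (hpmeas s hs.1 (le_trans (hs.2.trans hab) hbk)).mono
      (h𝒲mono' b hbk s hs.1 (hs.2.trans hab)) le_rfl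
  -- integrability cascade
  have hQint : ∀ j, 1 ≤ j → j ≤ k → Integrable (Q (j + 1)) (P[|B j]) := by
    intro j h1 h2
    rcases eq_or_lt_of_le h2 with h | h
    · subst h
      rw [hQtop]
      exact (integrable_cond_iff (hBpos j le_rfl).ne' (measure_ne_top P _) Y).mpr
        hYint.integrableOn
    · have hjk : j + 1 ≤ k := h
      haveI : IsProbabilityMeasure (P[|B j]) := cond_isProbabilityMeasure (hBpos j h2).ne'
      have base : Integrable (Q (j + 1)) (P[|B (j + 1)]) :=
        integrable_condExp.congr (hQver (j + 1) (by omega) hjk).symm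
      have hprod : Integrable
          (fun ω => Q (j + 1) ω * (B (j + 1)).indicator (fun _ => (1:ℝ)) ω) (P[|B j]) :=
        (integrable_mul_indicator_cond (hBmeas (j + 1) hjk) (hBmono j h) (hBpos j h2).ne'
          (measure_ne_top P _) (hBpos (j + 1) hjk).ne' (measure_ne_top P _) _).mpr base
      have hpver' := hpver (j + 1) (by omega) hjk
      simp only [Nat.add_sub_cancel] at hpver'
      exact integrable_transfer (h𝒲le (j + 1) (by omega) hjk) (hBmeas (j + 1) hjk)
        ((hQmeas (j + 1) (by omega) hjk).stronglyMeasurable) hpver' hε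
        ((hppos (j + 1) (by omega) hjk).filter_mono cond_absolutelyContinuous.ae_le)
        hprod
  -- main induction
  have key : ∀ m, m ≤ k → ∫ ω, Q 1 ω ∂P = ∫ ω in B m, (g m ω)⁻¹ * Q (m + 1) ω ∂P := by
    intro m hm
    induction m with
    | zero =>
      have hB0c : P (B 0)ᶜ = 0 := by
        rw [measure_compl (hBmeas 0 (Nat.zero_le k)) (measure_ne_top P _), hB0,
          measure_univ, tsub_self]
      have hres : P.restrict (B 0) = P := by
        rw [Measure.restrict_congr_set (ae_eq_univ.mpr hB0c), Measure.restrict_univ]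
      have hIcc : Finset.Icc 1 0 = (∅ : Finset ℕ) := Finset.Icc_eq_empty (by omega)
      calc ∫ ω, Q 1 ω ∂P = ∫ ω in B 0, Q 1 ω ∂P := by rw [hres]
        _ = ∫ ω in B 0, (g 0 ω)⁻¹ * Q (0 + 1) ω ∂P := by
            refine integral_congr_ae ?_
            filter_upwards with ω
            rw [hg, hIcc]
            simp
    | succ n ih =>
      have hn1k : n + 1 ≤ k := hm
      have hnk : n < k := hm
      rw [ih (Nat.le_of_succ_le hm)]
      haveI hνP : IsProbabilityMeasure (P[|B n]) :=
        cond_isProbabilityMeasure (hBpos n hnk.le).ne'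
      haveI hμP : IsProbabilityMeasure (P[|B (n + 1)]) :=
        cond_isProbabilityMeasure (hBpos (n + 1) hn1k).ne'
      have hW : 𝒲 (n + 1) ≤ inst := h𝒲le (n + 1) (by omega) hn1k
      have hgm : Measurable[𝒲 (n + 1)] (g (n + 1)) := hgmeas (n + 1) (n + 1) le_rfl (by omega) hn1k
      have hQm : Measurable[𝒲 (n + 1)] (Q (n + 1)) := hQmeas (n + 1) (by omega) hn1k
      have hQintμ : Integrable (Q (n + 1)) (P[|B (n + 1)]) :=
        integrable_condExp.congr (hQver (n + 1) (by omega) hn1k).symm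
      have hQ2intμ : Integrable (Q (n + 1 + 1)) (P[|B (n + 1)]) := hQint (n + 1) (by omega) hn1k
      have hbound : ∀ᵐ ω ∂P, ‖(g (n + 1) ω)⁻¹‖ ≤ (ε ^ (n + 1))⁻¹ := by
        filter_upwards [haeg (n + 1) hn1k] with ω h
        have h0 : 0 < g (n + 1) ω := lt_of_lt_of_le (pow_pos hε _) h
        rw [Real.norm_eq_abs, abs_of_nonneg (inv_nonneg.mpr h0.le)]
        exact inv_anti₀ (pow_pos hε _) h
      have hboundμ : ∀ᵐ ω ∂(P[|B (n + 1)]), ‖(g (n + 1) ω)⁻¹‖ ≤ (ε ^ (n + 1))⁻¹ :=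
        hbound.filter_mono cond_absolutelyContinuous.ae_le
      have hgaes : AEStronglyMeasurable (fun ω => (g (n + 1) ω)⁻¹) (P[|B (n + 1)]) :=
        ((hgm.inv.mono hW le_rfl).stronglyMeasurable).aestronglyMeasurable
      have hHμ : Integrable (fun ω => (g (n + 1) ω)⁻¹ * Q (n + 1) ω) (P[|B (n + 1)]) :=
        hQintμ.bdd_mul hgaes hboundμ
      have hHQ2μ : Integrable (fun ω => (g (n + 1) ω)⁻¹ * Q (n + 1 + 1) ω) (P[|B (n + 1)]) :=
        hQ2intμ.bdd_mul hgaes hboundμ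
      have hpver' := hpver (n + 1) (by omega) hn1k
      simp only [Nat.add_sub_cancel] at hpver'
      have hppos' : ∀ᵐ ω ∂(P[|B n]), ε ≤ p (n + 1) ω :=
        (hppos (n + 1) (by omega) hn1k).filter_mono cond_absolutelyContinuous.ae_le
      have haegν : ∀ᵐ ω ∂(P[|B n]), ε ^ n ≤ g n ω :=
        (haeg n hnk.le).filter_mono cond_absolutelyContinuous.ae_le
      have hind : Integrable ((B (n + 1)).indicator (fun _ => (1:ℝ))) (P[|B n]) :=
        (integrable_const 1).indicator (hBmeas (n + 1) hn1k)
      have hindprod : Integrable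
          (fun ω => ((g (n + 1) ω)⁻¹ * Q (n + 1) ω) * (B (n + 1)).indicator (fun _ => (1:ℝ)) ω)
          (P[|B n]) :=
        (integrable_mul_indicator_cond (hBmeas (n + 1) hn1k) (hBmono n hnk) (hBpos n hnk.le).ne'
          (measure_ne_top P _) (hBpos (n + 1) hn1k).ne' (measure_ne_top P _) _).mpr hHμ
      symm
      calc ∫ ω in B (n + 1), (g (n + 1) ω)⁻¹ * Q (n + 1 + 1) ω ∂P
          = (P (B (n + 1))).toReal *
              ∫ ω, (g (n + 1) ω)⁻¹ * Q (n + 1 + 1) ω ∂(P[|B (n + 1)]) :=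
            setIntegral_eq_cond P (hBpos (n + 1) hn1k).ne' (measure_ne_top P _) _
        _ = (P (B (n + 1))).toReal * ∫ ω, (g (n + 1) ω)⁻¹ *
              ((P[|B (n + 1)])[Q (n + 1 + 1)|𝒲 (n + 1)]) ω ∂(P[|B (n + 1)]) := by
            congr 1
            exact pullout_integral hW (hgm.inv.stronglyMeasurable) hHQ2μ hQ2intμ
        _ = (P (B (n + 1))).toReal *
              ∫ ω, (g (n + 1) ω)⁻¹ * Q (n + 1) ω ∂(P[|B (n + 1)]) := by
            congr 1
            refine integral_congr_ae ?_
            filter_upwards [hQver (n + 1) (by omega) hn1k] with ω h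
            rw [h]
        _ = ∫ ω in B (n + 1), (g (n + 1) ω)⁻¹ * Q (n + 1) ω ∂P :=
            (setIntegral_eq_cond P (hBpos (n + 1) hn1k).ne' (measure_ne_top P _) _).symm
        _ = ∫ ω in B n, (B (n + 1)).indicator (fun ω => (g (n + 1) ω)⁻¹ * Q (n + 1) ω) ω ∂P := by
            rw [setIntegral_indicator (hBmeas (n + 1) hn1k),
              Set.inter_eq_self_of_subset_right (hBmono n hnk)]
        _ = (P (B n)).toReal * ∫ ω,
              (B (n + 1)).indicator (fun ω => (g (n + 1) ω)⁻¹ * Q (n + 1) ω) ω ∂(P[|B n]) :=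
            setIntegral_eq_cond P (hBpos n hnk.le).ne' (measure_ne_top P _) _
        _ = (P (B n)).toReal * ∫ ω, ((g (n + 1) ω)⁻¹ * Q (n + 1) ω) *
              (B (n + 1)).indicator (fun _ => (1:ℝ)) ω ∂(P[|B n]) := by
            congr 1
            refine integral_congr_ae ?_
            filter_upwards with ω
            by_cases h : ω ∈ B (n + 1) <;> simp [h]
        _ = (P (B n)).toReal * ∫ ω, ((g (n + 1) ω)⁻¹ * Q (n + 1) ω) *
              ((P[|B n])[(B (n + 1)).indicator (fun _ => (1:ℝ))|𝒲 (n + 1)]) ω ∂(P[|B n]) := by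
            congr 1
            exact pullout_integral hW ((hgm.inv.mul hQm).stronglyMeasurable) hindprod hind
        _ = (P (B n)).toReal *
              ∫ ω, ((g (n + 1) ω)⁻¹ * Q (n + 1) ω) * p (n + 1) ω ∂(P[|B n]) := by
            congr 1
            refine integral_congr_ae ?_
            filter_upwards [hpver'] with ω h
            rw [h]
        _ = (P (B n)).toReal * ∫ ω, (g n ω)⁻¹ * Q (n + 1) ω ∂(P[|B n]) := by
            congr 1
            refine integral_congr_ae ?_
            filter_upwards [hppos', haegν] with ω h1 h2
            have hp0 : p (n + 1) ω ≠ 0 := (lt_of_lt_of_le hε h1).ne'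
            have hgn0 : g n ω ≠ 0 := (lt_of_lt_of_le (pow_pos hε n) h2).ne'
            have hsucc : g (n + 1) ω = g n ω * p (n + 1) ω := by
              rw [hg, hg, Finset.prod_Icc_succ_top (by omega)]
            rw [hsucc, mul_inv]
            field_simp
        _ = ∫ ω in B n, (g n ω)⁻¹ * Q (n + 1) ω ∂P :=
            (setIntegral_eq_cond P (hBpos n hnk.le).ne' (measure_ne_top P _) _).symm
  constructor
  · intro m h1 h2
    obtain ⟨n, rfl⟩ : ∃ n, m = n + 1 := ⟨m - 1, (Nat.succ_pred_eq_of_pos h1).symm⟩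
    simp only [Nat.add_sub_cancel]
    exact key n (by omega)
  · have h := key k le_rfl
    rw [hQtop] at h
    exact h
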